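/- Let Q(y0,y1) be a real quadratic form, a > 0, and let F(y0,y1,y2,y3) = (y2*y3 + Q(y0,y1))^2 - y0*y1*(y0+y1)*(y0 - a*y1). Then the point (0:0:0:1) is a singular point of the surface B = {F = 0} ⊂ CP^3, i.e. all four partial derivatives of F vanish there, and moreover it is the only singular point of B in the affine chart y3 ≠ 0 other than possibly points with y2 = y3 = 0. -/

import Mathlib

/-- The affine equation of the quartic surface `B` in the chart `y3 ≠ 0`, with
`Q(y0,y1) = b y0^2 + c y0 y1 + d y1^2` a real quadratic form and `a > 0`. -/
noncomputable def quarticF (a b c d : ℝ) (x0 x1 x2 : ℂ) : ℂ :=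
  (x2 + ((b : ℂ) * x0 ^ 2 + (c : ℂ) * x0 * x1 + (d : ℂ) * x1 ^ 2)) ^ 2
    - x0 * x1 * (x0 + x1) * (x0 - (a : ℂ) * x1)

/-- derivative of a generic quartic polynomial -/
lemma deriv_quartic (c0 c1 c2 c3 c4 x : ℂ) :
    deriv (fun t : ℂ => c4 * t ^ 4 + c3 * t ^ 3 + c2 * t ^ 2 + c1 * t + c0) x
      = 4 * c4 * x ^ 3 + 3 * c3 * x ^ 2 + 2 * c2 * x + c1 := by
  have h : HasDerivAt (fun t : ℂ => c4 * t ^ 4 + c3 * t ^ 3 + c2 * t ^ 2 + c1 * t + c0)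
      (c4 * (4 * x ^ 3) + c3 * (3 * x ^ 2) + c2 * (2 * x ^ 1) + c1 * 1 + 0) x := by
    have h4 := (hasDerivAt_pow 4 x).const_mul c4
    have h3 := (hasDerivAt_pow 3 x).const_mul c3
    have h2 := (hasDerivAt_pow 2 x).const_mul c2
    have h1 := (hasDerivAt_id x).const_mul c1
    have h0 := hasDerivAt_const x c0
    exact ((((h4.add h3).add h2).add h1).add h0).congr_deriv (by norm_num)
  rw [h.deriv]; ring

/-- The point `(0:0:0:1)` is a singular point of `B = {F = 0}` (the function and all
partial derivatives vanish there), and it is the only singular point of `B` in the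
affine chart `y3 ≠ 0`. -/
theorem stmt3 (a b c d : ℝ) (ha : 0 < a) :
    (quarticF a b c d 0 0 0 = 0 ∧
      deriv (fun t => quarticF a b c d t 0 0) 0 = 0 ∧
      deriv (fun t => quarticF a b c d 0 t 0) 0 = 0 ∧
      deriv (fun t => quarticF a b c d 0 0 t) 0 = 0)
    ∧ ∀ x0 x1 x2 : ℂ,
        quarticF a b c d x0 x1 x2 = 0 →
        deriv (fun t => quarticF a b c d t x1 x2) x0 = 0 →
        deriv (fun t => quarticF a b c d x0 t x2) x1 = 0 →
        deriv (fun t => quarticF a b c d x0 x1 t) x2 = 0 →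
        x0 = 0 ∧ x1 = 0 ∧ x2 = 0 := by

  have key0 : ∀ x0 x1 x2 : ℂ,
      deriv (fun t => quarticF a b c d t x1 x2) x0
        = 4 * (b:ℂ)^2 * x0^3 + 3 * (2*(b:ℂ)*(c:ℂ)*x1 - x1) * x0^2
          + 2 * ((c:ℂ)^2*x1^2 + 2*(b:ℂ)*(x2 + (d:ℂ)*x1^2) - (1-(a:ℂ))*x1^2) * x0
          + (2*(c:ℂ)*x1*(x2 + (d:ℂ)*x1^2) + (a:ℂ)*x1^3) := by
    intro x0 x1 x2
    have e : (fun t => quarticF a b c d t x1 x2)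
        = fun t : ℂ => (b:ℂ)^2 * t^4 + (2*(b:ℂ)*(c:ℂ)*x1 - x1) * t^3
            + ((c:ℂ)^2*x1^2 + 2*(b:ℂ)*(x2 + (d:ℂ)*x1^2) - (1-(a:ℂ))*x1^2) * t^2
            + (2*(c:ℂ)*x1*(x2 + (d:ℂ)*x1^2) + (a:ℂ)*x1^3) * t
            + (x2 + (d:ℂ)*x1^2)^2 := by
      funext t; simp only [quarticF]; ring
    rw [e, deriv_quartic]
  have key1 : ∀ x0 x1 x2 : ℂ,
      deriv (fun t => quarticF a b c d x0 t x2) x1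
        = 4 * (d:ℂ)^2 * x1^3 + 3 * (2*(d:ℂ)*(c:ℂ)*x0 + (a:ℂ)*x0) * x1^2
          + 2 * ((c:ℂ)^2*x0^2 + 2*(d:ℂ)*(x2 + (b:ℂ)*x0^2) - (1-(a:ℂ))*x0^2) * x1
          + (2*(c:ℂ)*x0*(x2 + (b:ℂ)*x0^2) - x0^3) := by
    intro x0 x1 x2
    have e : (fun t => quarticF a b c d x0 t x2)
        = fun t : ℂ => (d:ℂ)^2 * t^4 + (2*(d:ℂ)*(c:ℂ)*x0 + (a:ℂ)*x0) * t^3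
            + ((c:ℂ)^2*x0^2 + 2*(d:ℂ)*(x2 + (b:ℂ)*x0^2) - (1-(a:ℂ))*x0^2) * t^2
            + (2*(c:ℂ)*x0*(x2 + (b:ℂ)*x0^2) - x0^3) * t
            + (x2 + (b:ℂ)*x0^2)^2 := by
      funext t; simp only [quarticF]; ring
    rw [e, deriv_quartic]
  have key2 : ∀ x0 x1 x2 : ℂ,
      deriv (fun t => quarticF a b c d x0 x1 t) x2
        = 2 * (x2 + ((b:ℂ)*x0^2 + (c:ℂ)*x0*x1 + (d:ℂ)*x1^2)) := by
    intro x0 x1 x2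
    have e : (fun t => quarticF a b c d x0 x1 t)
        = fun t : ℂ => (0:ℂ) * t^4 + (0:ℂ) * t^3 + (1:ℂ) * t^2
            + (2*((b:ℂ)*x0^2 + (c:ℂ)*x0*x1 + (d:ℂ)*x1^2)) * t
            + (((b:ℂ)*x0^2 + (c:ℂ)*x0*x1 + (d:ℂ)*x1^2)^2
               - x0 * x1 * (x0 + x1) * (x0 - (a:ℂ)*x1)) := by
      funext t; simp only [quarticF]; ring
    rw [e, deriv_quartic]; ring
  have haC : (a:ℂ) ≠ 0 := Complex.ofReal_ne_zero.mpr ha.ne'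
  have ha1C : (1:ℂ) + (a:ℂ) ≠ 0 := by
    have : ((1 + a : ℝ) : ℂ) ≠ 0 := Complex.ofReal_ne_zero.mpr (by linarith)
    simpa using this
  constructor
  · refine ⟨by simp [quarticF], ?_, ?_, ?_⟩
    · rw [key0]; ring
    · rw [key1]; ring
    · rw [key2]; simp [quarticF]
  · intro x0 x1 x2 hF h0 h1 h2
    rw [key0] at h0
    rw [key1] at h1
    rw [key2] at h2
    simp only [quarticF] at hF
    -- w = 0
    have hw : x2 + ((b:ℂ)*x0^2 + (c:ℂ)*x0*x1 + (d:ℂ)*x1^2) = 0 := by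
      linear_combination h2 / 2
    -- P = 0
    have hP : x0 * x1 * (x0 + x1) * (x0 - (a:ℂ)*x1) = 0 := by
      linear_combination (x2 + ((b:ℂ)*x0^2 + (c:ℂ)*x0*x1 + (d:ℂ)*x1^2)) * hw - hF
    have hPx0 : x1 * ((x0+x1)*(x0-(a:ℂ)*x1) + x0*(x0-(a:ℂ)*x1) + x0*(x0+x1)) = 0 := by
      linear_combination -h0 + 2*(2*(b:ℂ)*x0 + (c:ℂ)*x1) * hw
    have hPx1 : x0 * ((x0+x1)*(x0-(a:ℂ)*x1) + x1*(x0-(a:ℂ)*x1) - (a:ℂ)*x1*(x0+x1)) = 0 := by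
      linear_combination -h1 + 2*((c:ℂ)*x0 + 2*(d:ℂ)*x1) * hw
    have h01 : x0 = 0 ∧ x1 = 0 := by
      rcases mul_eq_zero.mp hP with h | h4
      · rcases mul_eq_zero.mp h with h | h3
        · rcases mul_eq_zero.mp h with h0' | h1'
          · refine ⟨h0', ?_⟩
            rw [h0'] at hPx0
            have hcube : (a:ℂ) * x1^3 = 0 := by linear_combination -hPx0
            exact pow_eq_zero_iff (n := 3) (by norm_num) |>.mp
              ((mul_eq_zero.mp hcube).resolve_left haC)
          · refine ⟨?_, h1'⟩
            rw [h1'] at hPx1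
            have hcube : x0^3 = 0 := by linear_combination hPx1
            exact pow_eq_zero_iff (n := 3) (by norm_num) |>.mp hcube
        · have hx1 : x1 = -x0 := by linear_combination h3
          rw [hx1] at hPx1
          have hcube : ((1:ℂ)+(a:ℂ)) * x0^3 = 0 := by linear_combination -hPx1
          have hx0 : x0 = 0 := pow_eq_zero_iff (n := 3) (by norm_num) |>.mp
            ((mul_eq_zero.mp hcube).resolve_left ha1C)
          exact ⟨hx0, by rw [hx1, hx0]; ring⟩
      · have hx0 : x0 = (a:ℂ)*x1 := by linear_combination h4
        rw [hx0] at hPx0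
        have hcube : (a:ℂ) * (((1:ℂ)+(a:ℂ)) * x1^3) = 0 := by linear_combination hPx0
        have h5 := (mul_eq_zero.mp hcube).resolve_left haC
        have hx1 : x1 = 0 := pow_eq_zero_iff (n := 3) (by norm_num) |>.mp
          ((mul_eq_zero.mp h5).resolve_left ha1C)
        exact ⟨by rw [hx0, hx1]; ring, hx1⟩
    obtain ⟨hx0, hx1⟩ := h01
    refine ⟨hx0, hx1, ?_⟩
    rw [hx0, hx1] at hw
    simpa using hw
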